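/- Let a, b, c ∈ ℝ with b ≠ 0, a ≠ 2b and Δ > 0. Then 2bΔ + c√Δ ≠ 0 and 2bΔ − c√Δ ≠ 0. -/

import Mathlib

noncomputable section

/-- `Δ = (c/(2b))² − a/b + 2`. -/
def disc (a b c : ℝ) : ℝ := (c / (2 * b)) ^ 2 - a / b + 2

/-- The cubic `f₁(z) = b z³ − c z² + (a − 2b) z`. -/
def cubicF (a b c z : ℝ) : ℝ := b * z ^ 3 - c * z ^ 2 + (a - 2 * b) * z

/-- `β₂(z) = 2b z² − c z + (a − b)`. -/
def beta2 (a b c z : ℝ) : ℝ := 2 * b * z ^ 2 - c * z + (a - b)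

/-- `β₃(z) = −3b z² + 2c z + (2b − a)`. -/
def beta3 (a b c z : ℝ) : ℝ := -3 * b * z ^ 2 + 2 * c * z + (2 * b - a)

theorem stmt7 (a b c : ℝ) (hb : b ≠ 0) (ha : a ≠ 2 * b) (hΔ : 0 < disc a b c) :
    2 * b * disc a b c + c * Real.sqrt (disc a b c) ≠ 0 ∧
    2 * b * disc a b c - c * Real.sqrt (disc a b c) ≠ 0 := by
  set Δ := disc a b c with hΔdef
  set s := Real.sqrt Δ with hs
  have hs2 : s ^ 2 = Δ := Real.sq_sqrt hΔ.le
  have hkey : 4 * b ^ 2 * Δ ≠ c ^ 2 := by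
    intro h
    apply ha
    have hΔval : Δ = (c / (2 * b)) ^ 2 - a / b + 2 := rfl
    field_simp at hΔval
    have h4 : (4 * b ^ 2) * (a - 2 * b) = 0 := by linear_combination b * hΔval - b * h
    have hb2 : (4 : ℝ) * b ^ 2 ≠ 0 := by positivity
    have := (mul_eq_zero.mp h4).resolve_left hb2
    linarith
  constructor <;> intro h
  · have h2 : 2 * b * Δ = -(c * s) := by linarith
    have hsq : (2 * b * Δ) ^ 2 = (c * s) ^ 2 := by rw [h2]; ring
    have : (2 * b * Δ) ^ 2 = c ^ 2 * Δ := by rw [hsq, mul_pow, hs2]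
    exact hkey (by nlinarith)
  · have h2 : 2 * b * Δ = c * s := by linarith
    have hsq : (2 * b * Δ) ^ 2 = (c * s) ^ 2 := by rw [h2]
    have : (2 * b * Δ) ^ 2 = c ^ 2 * Δ := by rw [hsq, mul_pow, hs2]
    exact hkey (by nlinarith)
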